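/- Let P₁ ⊆ ℝ^{n₁}, P₂ ⊆ ℝ^{n₂} be polytopes containing the respective origins and let P := P₁ ◇ P₂ be their coproduct. For u = (u₁, u₂): if h(P₁,u₁) = h(P₂,u₂) then F(P,u) = F(P₁,u₁) ◇ F(P₂,u₂); if h(P₁,u₁) > h(P₂,u₂) then F(P,u) = F(P₁,u₁) × {0}; and if h(P₁,u₁) < h(P₂,u₂) then F(P,u) = {0} × F(P₂,u₂). -/

import Mathlib

open Set

noncomputable def supp {n : ℕ} (K : Set (Fin n → ℝ)) (u : Fin n → ℝ) : ℝ :=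
  sSup ((fun x => ∑ i, u i * x i) '' K)

noncomputable def supp2 {n₁ n₂ : ℕ} (K : Set ((Fin n₁ → ℝ) × (Fin n₂ → ℝ)))
    (u : (Fin n₁ → ℝ) × (Fin n₂ → ℝ)) : ℝ :=
  sSup ((fun p => ∑ i, u.1 i * p.1 i + ∑ j, u.2 j * p.2 j) '' K)

/-- The exposed face of `K` in direction `u`. -/
noncomputable def expFace {n : ℕ} (K : Set (Fin n → ℝ)) (u : Fin n → ℝ) : Set (Fin n → ℝ) :=
  {x ∈ K | ∑ i, u i * x i = supp K u}

noncomputable def expFace2 {n₁ n₂ : ℕ} (K : Set ((Fin n₁ → ℝ) × (Fin n₂ → ℝ)))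
    (u : (Fin n₁ → ℝ) × (Fin n₂ → ℝ)) : Set ((Fin n₁ → ℝ) × (Fin n₂ → ℝ)) :=
  {p ∈ K | ∑ i, u.1 i * p.1 i + ∑ j, u.2 j * p.2 j = supp2 K u}

def coprod {n₁ n₂ : ℕ} (A : Set (Fin n₁ → ℝ)) (B : Set (Fin n₂ → ℝ)) :
    Set ((Fin n₁ → ℝ) × (Fin n₂ → ℝ)) :=
  convexHull ℝ ((fun x => (x, (0 : Fin n₂ → ℝ))) '' A ∪ (fun y => ((0 : Fin n₁ → ℝ), y)) '' B)

section Aux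

variable {E : Type*} [AddCommGroup E] [Module ℝ E]

/-- sup of a linear functional over the convex hull of a finite set. -/
lemma sSup_image_hull (S : Finset E) (hS : S.Nonempty) (ℓ : E →ₗ[ℝ] ℝ) :
    sSup (⇑ℓ '' convexHull ℝ (S : Set E)) = S.sup' hS ℓ := by
  apply IsGreatest.csSup_eq
  constructor
  · obtain ⟨v, hv, hveq⟩ := Finset.exists_mem_eq_sup' hS ℓ
    exact ⟨v, subset_convexHull ℝ _ hv, hveq.symm⟩
  · rintro y ⟨x, hx, rfl⟩
    have hsub : convexHull ℝ (S : Set E) ⊆ ⇑ℓ ⁻¹' (Set.Iic (S.sup' hS ℓ)) :=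
      convexHull_min (fun v hv => Finset.le_sup' ℓ hv) ((convex_Iic _).linear_preimage ℓ)
    exact hsub hx

/-- The exposed face of the convex hull of a finite set is the hull of the maximizers. -/
lemma face_hull (S : Finset E) (hS : S.Nonempty) (ℓ : E →ₗ[ℝ] ℝ) :
    {x ∈ convexHull ℝ (S : Set E) | ℓ x = S.sup' hS ℓ} =
      convexHull ℝ {v ∈ (S : Set E) | ℓ v = S.sup' hS ℓ} := by
  classical
  set M := S.sup' hS ℓ with hM
  apply Set.Subset.antisymm
  · rintro x ⟨hx, hℓx⟩
    rw [Finset.convexHull_eq] at hx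
    obtain ⟨w, hw0, hw1, hwx⟩ := hx
    set T := S.filter (fun v => ℓ v = M) with hT
    have hle : ∀ v ∈ S, ℓ v ≤ M := fun v hv => Finset.le_sup' ℓ hv
    have hx' : ℓ x = ∑ v ∈ S, w v * ℓ v := by
      rw [← hwx, Finset.centerMass_eq_of_sum_1 _ _ hw1, map_sum]
      simp [smul_eq_mul]
    have hsum : ∑ v ∈ S, w v * (M - ℓ v) = 0 := by
      have h1 : ∑ v ∈ S, w v * M = M := by rw [← Finset.sum_mul, hw1, one_mul]
      have : ∑ v ∈ S, w v * (M - ℓ v) = (∑ v ∈ S, w v * M) - ∑ v ∈ S, w v * ℓ v := by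
        rw [← Finset.sum_sub_distrib]; simp only [mul_sub]
      rw [this, h1, ← hx', hℓx, sub_self]
    have hzero : ∀ v ∈ S, w v * (M - ℓ v) = 0 := by
      rw [← Finset.sum_eq_zero_iff_of_nonneg (fun v hv =>
        mul_nonneg (hw0 v hv) (sub_nonneg.2 (hle v hv)))]
      exact hsum
    have hout : ∀ v ∈ S, v ∉ T → w v = 0 := by
      intro v hv hvT
      rcases mul_eq_zero.1 (hzero v hv) with h | h
      · exact h
      · exact absurd (by rw [hT]; exact Finset.mem_filter.2 ⟨hv, by linarith [sub_eq_zero.1 h]⟩) hvT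
    have hxT : x = T.centerMass w id := by
      rw [← hwx]; exact (Finset.centerMass_subset id (Finset.filter_subset _ _) hout).symm
    have hsumT : ∑ v ∈ T, w v = 1 := by
      rw [← hw1]; exact Finset.sum_subset (Finset.filter_subset _ _) hout
    have hmem : x ∈ convexHull ℝ (T : Set E) := by
      rw [hxT]
      exact T.centerMass_id_mem_convexHull (fun v hv => hw0 v (Finset.filter_subset _ _ hv))
        (by rw [hsumT]; norm_num)
    have hTset : (T : Set E) = {v ∈ (S : Set E) | ℓ v = M} := by
      rw [hT, Finset.coe_filter]; rfl
    rwa [hTset] at hmem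
  · apply convexHull_min
    · rintro v ⟨hv, hℓv⟩
      exact ⟨subset_convexHull ℝ _ hv, hℓv⟩
    · exact (convex_convexHull ℝ _).inter ((convex_singleton M).linear_preimage ℓ)

end Aux

noncomputable def lfun {n : ℕ} (u : Fin n → ℝ) : (Fin n → ℝ) →ₗ[ℝ] ℝ where
  toFun x := ∑ i, u i * x i
  map_add' x y := by simp [mul_add, Finset.sum_add_distrib]
  map_smul' c x := by simp [Finset.mul_sum, mul_left_comm]

@[simp] lemma lfun_apply {n : ℕ} (u x : Fin n → ℝ) : lfun u x = ∑ i, u i * x i := rfl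

lemma image_hull_inl {n₁ n₂ : ℕ} (A : Set (Fin n₁ → ℝ)) :
    (fun x => (x, (0 : Fin n₂ → ℝ))) '' convexHull ℝ A =
      convexHull ℝ ((fun x => (x, (0 : Fin n₂ → ℝ))) '' A) := by
  simpa [LinearMap.coe_inl] using
    (LinearMap.inl ℝ (Fin n₁ → ℝ) (Fin n₂ → ℝ)).image_convexHull A

lemma image_hull_inr {n₁ n₂ : ℕ} (B : Set (Fin n₂ → ℝ)) :
    (fun y => ((0 : Fin n₁ → ℝ), y)) '' convexHull ℝ B =
      convexHull ℝ ((fun y => ((0 : Fin n₁ → ℝ), y)) '' B) := by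
  simpa [LinearMap.coe_inr] using
    (LinearMap.inr ℝ (Fin n₁ → ℝ) (Fin n₂ → ℝ)).image_convexHull B

lemma coprod_hull {n₁ n₂ : ℕ} (A : Set (Fin n₁ → ℝ)) (B : Set (Fin n₂ → ℝ)) :
    coprod (convexHull ℝ A) (convexHull ℝ B) =
      convexHull ℝ ((fun x => (x, (0 : Fin n₂ → ℝ))) '' A ∪
        (fun y => ((0 : Fin n₁ → ℝ), y)) '' B) := by
  unfold coprod
  rw [image_hull_inl, image_hull_inr, convexHull_convexHull_union_left,
    convexHull_convexHull_union_right]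

theorem stmt6 (n₁ n₂ : ℕ) (V₁ : Finset (Fin n₁ → ℝ)) (V₂ : Finset (Fin n₂ → ℝ))
    (h₁ : (0 : Fin n₁ → ℝ) ∈ convexHull ℝ (V₁ : Set (Fin n₁ → ℝ)))
    (h₂ : (0 : Fin n₂ → ℝ) ∈ convexHull ℝ (V₂ : Set (Fin n₂ → ℝ)))
    (u₁ : Fin n₁ → ℝ) (u₂ : Fin n₂ → ℝ) :
    (supp (convexHull ℝ (V₁ : Set (Fin n₁ → ℝ))) u₁ =
        supp (convexHull ℝ (V₂ : Set (Fin n₂ → ℝ))) u₂ →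
      expFace2 (coprod (convexHull ℝ (V₁ : Set (Fin n₁ → ℝ)))
          (convexHull ℝ (V₂ : Set (Fin n₂ → ℝ)))) (u₁, u₂) =
        coprod (expFace (convexHull ℝ (V₁ : Set (Fin n₁ → ℝ))) u₁)
          (expFace (convexHull ℝ (V₂ : Set (Fin n₂ → ℝ))) u₂)) ∧
    (supp (convexHull ℝ (V₂ : Set (Fin n₂ → ℝ))) u₂ <
        supp (convexHull ℝ (V₁ : Set (Fin n₁ → ℝ))) u₁ →
      expFace2 (coprod (convexHull ℝ (V₁ : Set (Fin n₁ → ℝ)))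
          (convexHull ℝ (V₂ : Set (Fin n₂ → ℝ)))) (u₁, u₂) =
        (fun x => (x, (0 : Fin n₂ → ℝ))) ''
          expFace (convexHull ℝ (V₁ : Set (Fin n₁ → ℝ))) u₁) ∧
    (supp (convexHull ℝ (V₁ : Set (Fin n₁ → ℝ))) u₁ <
        supp (convexHull ℝ (V₂ : Set (Fin n₂ → ℝ))) u₂ →
      expFace2 (coprod (convexHull ℝ (V₁ : Set (Fin n₁ → ℝ)))
          (convexHull ℝ (V₂ : Set (Fin n₂ → ℝ)))) (u₁, u₂) =
        (fun y => ((0 : Fin n₁ → ℝ), y)) ''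
          expFace (convexHull ℝ (V₂ : Set (Fin n₂ → ℝ))) u₂) := by
  classical
  have hV₁ : V₁.Nonempty := by
    rcases V₁.eq_empty_or_nonempty with h | h
    · rw [h] at h₁; simp at h₁
    · exact h
  have hV₂ : V₂.Nonempty := by
    rcases V₂.eq_empty_or_nonempty with h | h
    · rw [h] at h₂; simp at h₂
    · exact h
  set M₁ := V₁.sup' hV₁ (lfun u₁) with hM₁def
  set M₂ := V₂.sup' hV₂ (lfun u₂) with hM₂def
  set L : ((Fin n₁ → ℝ) × (Fin n₂ → ℝ)) →ₗ[ℝ] ℝ := (lfun u₁).coprod (lfun u₂) with hLdef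
  have hLapp : ∀ p : (Fin n₁ → ℝ) × (Fin n₂ → ℝ),
      L p = ∑ i, u₁ i * p.1 i + ∑ j, u₂ j * p.2 j := fun p => rfl
  have hL1 : ∀ v : Fin n₁ → ℝ, L (v, 0) = lfun u₁ v := by
    intro v; simp [hLdef]
  have hL2 : ∀ w : Fin n₂ → ℝ, L (0, w) = lfun u₂ w := by
    intro w; simp [hLdef]
  -- support functions
  have hsupp₁ : supp (convexHull ℝ (V₁ : Set (Fin n₁ → ℝ))) u₁ = M₁ := by
    have hco : (fun x : Fin n₁ → ℝ => ∑ i, u₁ i * x i) = ⇑(lfun u₁) := rfl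
    rw [supp, hco, sSup_image_hull V₁ hV₁]
  have hsupp₂ : supp (convexHull ℝ (V₂ : Set (Fin n₂ → ℝ))) u₂ = M₂ := by
    have hco : (fun x : Fin n₂ → ℝ => ∑ i, u₂ i * x i) = ⇑(lfun u₂) := rfl
    rw [supp, hco, sSup_image_hull V₂ hV₂]
  -- faces of the factors
  have hface₁ : expFace (convexHull ℝ (V₁ : Set (Fin n₁ → ℝ))) u₁ =
      convexHull ℝ {v ∈ (V₁ : Set (Fin n₁ → ℝ)) | lfun u₁ v = M₁} := by
    unfold expFace
    rw [hsupp₁]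
    exact face_hull V₁ hV₁ (lfun u₁)
  have hface₂ : expFace (convexHull ℝ (V₂ : Set (Fin n₂ → ℝ))) u₂ =
      convexHull ℝ {v ∈ (V₂ : Set (Fin n₂ → ℝ)) | lfun u₂ v = M₂} := by
    unfold expFace
    rw [hsupp₂]
    exact face_hull V₂ hV₂ (lfun u₂)
  -- the vertex set of the coproduct
  set W : Finset ((Fin n₁ → ℝ) × (Fin n₂ → ℝ)) :=
    V₁.image (fun x => (x, (0 : Fin n₂ → ℝ))) ∪
      V₂.image (fun y => ((0 : Fin n₁ → ℝ), y)) with hWdef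
  have hW : W.Nonempty := Finset.Nonempty.mono Finset.subset_union_left (hV₁.image _)
  have hWcoe : (W : Set ((Fin n₁ → ℝ) × (Fin n₂ → ℝ))) =
      (fun x => (x, (0 : Fin n₂ → ℝ))) '' (V₁ : Set (Fin n₁ → ℝ)) ∪
        (fun y => ((0 : Fin n₁ → ℝ), y)) '' (V₂ : Set (Fin n₂ → ℝ)) := by
    simp [hWdef]
  have hmemW : ∀ p : (Fin n₁ → ℝ) × (Fin n₂ → ℝ), p ∈ (W : Set _) ↔
      (∃ v ∈ V₁, (v, (0 : Fin n₂ → ℝ)) = p) ∨ (∃ w ∈ V₂, ((0 : Fin n₁ → ℝ), w) = p) := by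
    intro p
    rw [hWcoe]
    simp [Set.mem_union, Set.mem_image]
  have hP : coprod (convexHull ℝ (V₁ : Set (Fin n₁ → ℝ))) (convexHull ℝ (V₂ : Set (Fin n₂ → ℝ)))
      = convexHull ℝ (W : Set ((Fin n₁ → ℝ) × (Fin n₂ → ℝ))) := by
    rw [coprod_hull, hWcoe]
  -- sup over W
  have hLsup : W.sup' hW L = max M₁ M₂ := by
    apply le_antisymm
    · apply Finset.sup'_le
      intro p hp
      rcases (hmemW p).1 (Finset.mem_coe.2 hp) with ⟨v, hv, rfl⟩ | ⟨w, hw, rfl⟩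
      · rw [hL1]; exact le_trans (Finset.le_sup' (lfun u₁) hv) (le_max_left _ _)
      · rw [hL2]; exact le_trans (Finset.le_sup' (lfun u₂) hw) (le_max_right _ _)
    · apply max_le
      · obtain ⟨v, hv, hveq⟩ := Finset.exists_mem_eq_sup' hV₁ (lfun u₁)
        have hmem : (v, (0 : Fin n₂ → ℝ)) ∈ W := by
          rw [← Finset.mem_coe, hmemW]; exact Or.inl ⟨v, hv, rfl⟩
        calc M₁ = L (v, 0) := by rw [hL1, hM₁def, hveq]
        _ ≤ W.sup' hW L := Finset.le_sup' L hmem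
      · obtain ⟨w, hw, hweq⟩ := Finset.exists_mem_eq_sup' hV₂ (lfun u₂)
        have hmem : ((0 : Fin n₁ → ℝ), w) ∈ W := by
          rw [← Finset.mem_coe, hmemW]; exact Or.inr ⟨w, hw, rfl⟩
        calc M₂ = L (0, w) := by rw [hL2, hM₂def, hweq]
        _ ≤ W.sup' hW L := Finset.le_sup' L hmem
  -- support of the coproduct
  have hsupp2 : supp2 (coprod (convexHull ℝ (V₁ : Set (Fin n₁ → ℝ)))
      (convexHull ℝ (V₂ : Set (Fin n₂ → ℝ)))) (u₁, u₂) = max M₁ M₂ := by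
    have hco : (fun p : (Fin n₁ → ℝ) × (Fin n₂ → ℝ) =>
        ∑ i, (u₁, u₂).1 i * p.1 i + ∑ j, (u₁, u₂).2 j * p.2 j) = ⇑L := rfl
    rw [supp2, hco, hP, sSup_image_hull W hW L, hLsup]
  -- face of the coproduct
  have hfaceP : expFace2 (coprod (convexHull ℝ (V₁ : Set (Fin n₁ → ℝ)))
      (convexHull ℝ (V₂ : Set (Fin n₂ → ℝ)))) (u₁, u₂) =
      convexHull ℝ {p ∈ (W : Set ((Fin n₁ → ℝ) × (Fin n₂ → ℝ))) | L p = max M₁ M₂} := by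
    unfold expFace2
    rw [hsupp2, hP]
    have := face_hull W hW L
    rw [hLsup] at this
    exact this
  refine ⟨?_, ?_, ?_⟩
  · -- equal supports
    intro h
    rw [hsupp₁, hsupp₂] at h
    have hmax : max M₁ M₂ = M₁ := by rw [h, max_self]
    rw [hfaceP, hface₁, hface₂, coprod_hull, hmax]
    congr 1
    ext p
    constructor
    · rintro ⟨hp, hLp⟩
      rcases (hmemW p).1 hp with ⟨v, hv, rfl⟩ | ⟨w, hw, rfl⟩
      · exact Or.inl ⟨v, ⟨hv, by rw [← hL1 v, hLp]⟩, rfl⟩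
      · exact Or.inr ⟨w, ⟨hw, by rw [← hL2 w, hLp, h]⟩, rfl⟩
    · rintro (⟨v, ⟨hv, hveq⟩, rfl⟩ | ⟨w, ⟨hw, hweq⟩, rfl⟩)
      · exact ⟨(hmemW _).2 (Or.inl ⟨v, hv, rfl⟩), by rw [hL1, hveq]⟩
      · exact ⟨(hmemW _).2 (Or.inr ⟨w, hw, rfl⟩), by rw [hL2, hweq, h]⟩
  · -- M₂ < M₁
    intro h
    rw [hsupp₁, hsupp₂] at h
    have hmax : max M₁ M₂ = M₁ := max_eq_left h.le
    rw [hfaceP, hface₁, hmax]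
    have hset : {p ∈ (W : Set ((Fin n₁ → ℝ) × (Fin n₂ → ℝ))) | L p = M₁} =
        (fun x => (x, (0 : Fin n₂ → ℝ))) '' {v ∈ (V₁ : Set (Fin n₁ → ℝ)) | lfun u₁ v = M₁} := by
      ext p
      constructor
      · rintro ⟨hp, hLp⟩
        rcases (hmemW p).1 hp with ⟨v, hv, rfl⟩ | ⟨w, hw, rfl⟩
        · exact ⟨v, ⟨hv, by rw [← hL1 v, hLp]⟩, rfl⟩
        · exfalso
          rw [hL2] at hLp
          have : lfun u₂ w ≤ M₂ := Finset.le_sup' (lfun u₂) hw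
          linarith
      · rintro ⟨v, ⟨hv, hveq⟩, rfl⟩
        exact ⟨(hmemW _).2 (Or.inl ⟨v, hv, rfl⟩), by rw [hL1, hveq]⟩
    rw [hset, ← image_hull_inl]
  · -- M₁ < M₂
    intro h
    rw [hsupp₁, hsupp₂] at h
    have hmax : max M₁ M₂ = M₂ := max_eq_right h.le
    rw [hfaceP, hface₂, hmax]
    have hset : {p ∈ (W : Set ((Fin n₁ → ℝ) × (Fin n₂ → ℝ))) | L p = M₂} =
        (fun y => ((0 : Fin n₁ → ℝ), y)) '' {v ∈ (V₂ : Set (Fin n₂ → ℝ)) | lfun u₂ v = M₂} := by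
      ext p
      constructor
      · rintro ⟨hp, hLp⟩
        rcases (hmemW p).1 hp with ⟨v, hv, rfl⟩ | ⟨w, hw, rfl⟩
        · exfalso
          rw [hL1] at hLp
          have : lfun u₁ v ≤ M₁ := Finset.le_sup' (lfun u₁) hv
          linarith
        · exact ⟨w, ⟨hw, by rw [← hL2 w, hLp]⟩, rfl⟩
      · rintro ⟨w, ⟨hw, hweq⟩, rfl⟩
        exact ⟨(hmemW _).2 (Or.inr ⟨w, hw, rfl⟩), by rw [hL2, hweq]⟩
    rw [hset, ← image_hull_inr]
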